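/- Let ω₀ = (ω₀₁, ω₀₂) satisfy the Diophantine condition |⟨k, ω₀⟩| ≥ α/|k|^τ for all k ∈ ℤ²∖{0}, and let ω_*(ε) = ω₀ + ω̂(ε) where ω̂ : [0, ε₀] → ℝ² is continuous with ω̂(0) = 0. Then there exists a non-empty set I*_{ε₀} ⊆ [0, ε₀] of at least continuum cardinality such that for every ε ∈ I*_{ε₀}, |⟨k, ω_*(ε)⟩| ≥ α/(2|k|^{2τ+2}) for all k ∈ ℤ²∖{0}. Moreover, if ω̂ is C¹ on [0, ε₀] with ‖ω̂‖_{C¹} ≤ c, then I*_{ε₀} has positive Lebesgue measure. -/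

import Mathlib

open MeasureTheory

lemma aux_continuum_le {V : Set ℝ} (hV : IsClosed V) (hpos : volume V ≠ 0) :
    Cardinal.continuum ≤ Cardinal.mk V := by
  have hunc : ¬ V.Countable := fun h => hpos (h.measure_zero _)
  obtain ⟨f, hr, -, hinj⟩ := hV.exists_nat_bool_injection_of_not_countable hunc
  have h1 : Cardinal.mk (Set.range f) ≤ Cardinal.mk V := Cardinal.mk_le_mk_of_subset hr
  rw [Cardinal.mk_range_eq f hinj] at h1
  refine le_trans (le_of_eq ?_) h1
  simp [Cardinal.mk_arrow, Cardinal.mk_bool, Cardinal.two_power_aleph0]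


lemma nk_one_le {k : Fin 2 → ℤ} (hk : k ≠ 0) : 1 ≤ |(k 0 : ℝ)| + |(k 1 : ℝ)| := by
  have h : k 0 ≠ 0 ∨ k 1 ≠ 0 := by
    by_contra h
    push_neg at h
    exact hk (funext fun i => by fin_cases i <;> simp [h.1, h.2])
  have h0 : (0:ℝ) ≤ |(k 0 : ℝ)| := abs_nonneg _
  have h1 : (0:ℝ) ≤ |(k 1 : ℝ)| := abs_nonneg _
  rcases h with h | h
  · have : (1:ℝ) ≤ |(k 0 : ℝ)| := by
      rw [← Int.cast_abs]; exact_mod_cast Int.one_le_abs h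
    linarith
  · have : (1:ℝ) ≤ |(k 1 : ℝ)| := by
      rw [← Int.cast_abs]; exact_mod_cast Int.one_le_abs h
    linarith

lemma key_good (τ α a b : ℝ) (hτ : 1 < τ) (hα : 0 < α) (ha : α ≤ |a|) (hb : α ≤ |b|)
    (x0 x1 : ℝ) (hx0 : |x0 - a| ≤ α/2) (hx1 : |x1 - b| ≤ α/2)
    (k : Fin 2 → ℤ) (hk : k ≠ 0)
    (hgood : ∀ (_ : k 0 ≠ 0) (_ : k 1 ≠ 0),
      α / (|a| * (|(k 0 : ℝ)| + |(k 1 : ℝ)|) ^ (2*τ+2) * |(k 1 : ℝ)|)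
        ≤ |x1/x0 + (k 0 : ℝ)/(k 1 : ℝ)|) :
    α / (2 * (|(k 0 : ℝ)| + |(k 1 : ℝ)|) ^ (2*τ+2)) ≤ |(k 0 : ℝ) * x0 + (k 1 : ℝ) * x1| := by
  set nk : ℝ := |(k 0 : ℝ)| + |(k 1 : ℝ)| with hnkdef
  have hnk : 1 ≤ nk := nk_one_le hk
  have hexp : (0:ℝ) ≤ 2*τ+2 := by linarith
  have h1p : 1 ≤ nk ^ (2*τ+2) := Real.one_le_rpow hnk hexp
  have hpp : 0 < nk ^ (2*τ+2) := lt_of_lt_of_le one_pos h1p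
  have haα : 0 < |a| := lt_of_lt_of_le hα ha
  have hx0' : α/2 ≤ |x0| := by
    have := abs_sub_abs_le_abs_sub x0 a
    rw [abs_sub_comm] at hx0
    have h2 := abs_sub_abs_le_abs_sub a x0
    linarith [ha, h2.trans hx0]
  have hx1' : α/2 ≤ |x1| := by
    have h2 := abs_sub_abs_le_abs_sub b x1
    rw [abs_sub_comm] at hx1
    linarith [hb, h2.trans hx1]
  have hx0a : |a|/2 ≤ |x0| := by
    have h2 := abs_sub_abs_le_abs_sub a x0
    rw [abs_sub_comm] at hx0
    linarith [h2.trans hx0, ha]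
  have htriv : α / (2 * nk ^ (2*τ+2)) ≤ α / 2 := by
    apply div_le_div_of_nonneg_left hα.le two_pos
    nlinarith
  by_cases hk1 : k 1 = 0
  · have hk0 : k 0 ≠ 0 := by
      intro hk0; exact hk (funext fun i => by fin_cases i <;> simp [hk0, hk1])
    have hck : (1:ℝ) ≤ |(k 0 : ℝ)| := by
      rw [← Int.cast_abs]; exact_mod_cast Int.one_le_abs hk0
    calc α / (2 * nk ^ (2*τ+2)) ≤ α/2 := htriv
      _ ≤ |(k 0 : ℝ)| * |x0| := by nlinarith
      _ = |(k 0 : ℝ) * x0 + (k 1 : ℝ) * x1| := by rw [hk1]; simp [abs_mul]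
  · by_cases hk0 : k 0 = 0
    · have hck : (1:ℝ) ≤ |(k 1 : ℝ)| := by
        rw [← Int.cast_abs]; exact_mod_cast Int.one_le_abs hk1
      calc α / (2 * nk ^ (2*τ+2)) ≤ α/2 := htriv
        _ ≤ |(k 1 : ℝ)| * |x1| := by nlinarith
        _ = |(k 0 : ℝ) * x0 + (k 1 : ℝ) * x1| := by rw [hk0]; simp [abs_mul]
    · -- both nonzero
      have hck1 : (1:ℝ) ≤ |(k 1 : ℝ)| := by
        rw [← Int.cast_abs]; exact_mod_cast Int.one_le_abs hk1
      have hk1R : ((k 1 : ℝ)) ≠ 0 := Int.cast_ne_zero.mpr hk1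
      have hx0ne : x0 ≠ 0 := by
        intro h; rw [h] at hx0'; simp at hx0'; linarith
      have hG := hgood hk0 hk1
      have hiden : (k 0 : ℝ) * x0 + (k 1 : ℝ) * x1
          = x0 * (k 1 : ℝ) * (x1/x0 + (k 0 : ℝ)/(k 1 : ℝ)) := by
        field_simp; ring
      rw [hiden, abs_mul, abs_mul]
      calc α / (2 * nk ^ (2*τ+2))
          = (|a|/2) * |(k 1 : ℝ)| * (α / (|a| * nk ^ (2*τ+2) * |(k 1 : ℝ)|)) := by
            field_simp
        _ ≤ (|x0|) * |(k 1 : ℝ)| * |x1/x0 + (k 0 : ℝ)/(k 1 : ℝ)| := by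
            have hr0 : 0 ≤ α / (|a| * nk ^ (2*τ+2) * |(k 1 : ℝ)|) := by positivity
            apply mul_le_mul (mul_le_mul hx0a le_rfl (by positivity) (abs_nonneg _)) hG hr0
            positivity

lemma key_colinear (τ α a b x0 x1 : ℝ) (hτ : 1 < τ) (hα : 0 < α) (ha : α ≤ |a|)
    (hx0a : |a|/2 ≤ |x0|) (hcol : x1 * a = b * x0)
    (k : Fin 2 → ℤ) (hk : k ≠ 0)
    (hdk : α / (|(k 0:ℝ)|+|(k 1:ℝ)|) ^ τ ≤ |(k 0:ℝ) * a + (k 1:ℝ) * b|) :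
    α / (2 * (|(k 0:ℝ)|+|(k 1:ℝ)|) ^ (2*τ+2)) ≤ |(k 0:ℝ)*x0 + (k 1:ℝ)*x1| := by
  have hnk : 1 ≤ |(k 0 : ℝ)| + |(k 1 : ℝ)| := by
    have h : k 0 ≠ 0 ∨ k 1 ≠ 0 := by
      by_contra h
      push_neg at h
      exact hk (funext fun i => by fin_cases i <;> simp [h.1, h.2])
    have h0 : (0:ℝ) ≤ |(k 0 : ℝ)| := abs_nonneg _
    have h1 : (0:ℝ) ≤ |(k 1 : ℝ)| := abs_nonneg _
    rcases h with h | h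
    · have : (1:ℝ) ≤ |(k 0 : ℝ)| := by
        rw [← Int.cast_abs]; exact_mod_cast Int.one_le_abs h
      linarith
    · have : (1:ℝ) ≤ |(k 1 : ℝ)| := by
        rw [← Int.cast_abs]; exact_mod_cast Int.one_le_abs h
      linarith
  set nk : ℝ := |(k 0 : ℝ)| + |(k 1 : ℝ)|
  have haα : 0 < |a| := lt_of_lt_of_le hα ha
  have hane : a ≠ 0 := fun h => by simp [h] at haα
  have hτp : 0 < nk ^ τ := Real.rpow_pos_of_pos (by linarith) _
  have hpp : 0 < nk ^ (2*τ+2) := Real.rpow_pos_of_pos (by linarith) _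
  have hmono : nk ^ τ ≤ nk ^ (2*τ+2) :=
    Real.rpow_le_rpow_of_exponent_le hnk (by linarith)
  have hiden : (k 0:ℝ)*x0 + (k 1:ℝ)*x1 = (x0/a) * ((k 0:ℝ) * a + (k 1:ℝ) * b) := by
    field_simp
    linear_combination (k 1 : ℝ) * hcol
  rw [hiden, abs_mul, abs_div]
  calc α / (2 * nk ^ (2*τ+2)) ≤ α / (2 * nk ^ τ) := by
        apply div_le_div_of_nonneg_left hα.le (by positivity)
        nlinarith
    _ = (1/2) * (α / nk ^ τ) := by ring
    _ ≤ (|x0|/|a|) * |(k 0:ℝ) * a + (k 1:ℝ) * b| := by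
        apply mul_le_mul _ hdk (by positivity) (by positivity)
        rw [le_div_iff₀ haα]
        linarith

lemma halg (A K Dp N P Q al : ℝ) (hA : A ≠ 0) (hK : K ≠ 0) (hD : Dp ≠ 0) :
    2*(al/(A*Dp*K))*(P*Q*N) = (2*(al/A)*P)*Q*(N/Dp/K) := by
  field_simp

set_option maxHeartbeats 1000000 in
lemma per_k (τ α a b h θ m β : ℝ) (hτ : 1 < τ) (hα : 0 < α) (ha : α ≤ |a|) (hh : 0 < h)
    (hθd : θ = (3*τ+1)/(2*τ+2)) (hmd : m = (τ+3)/2) (hβd : β = (τ+3)/4)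
    (k : Fin 2 → ℤ) (hk0 : k 0 ≠ 0) (hk1 : k 1 ≠ 0)
    (hdk : α / (|(k 0:ℝ)|+|(k 1:ℝ)|) ^ τ ≤ |(k 0:ℝ) * a + (k 1:ℝ) * b|)
    (hpart : |b/a + (k 0:ℝ)/(k 1:ℝ)|
      ≤ h + α / (|a| * (|(k 0:ℝ)|+|(k 1:ℝ)|) ^ (2*τ+2) * |(k 1:ℝ)|)) :
    2 * (α / (|a| * (|(k 0:ℝ)|+|(k 1:ℝ)|) ^ (2*τ+2) * |(k 1:ℝ)|))
      ≤ (2*(α/|a|)*(2*|a|/α) ^ θ) * h ^ θ * (|(k 0:ℝ)| ^ (-β) * |(k 1:ℝ)| ^ (-β)) := by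
  have hk0R : (1:ℝ) ≤ |(k 0:ℝ)| := by
    rw [← Int.cast_abs]; exact_mod_cast Int.one_le_abs hk0
  have hk1R : (1:ℝ) ≤ |(k 1:ℝ)| := by
    rw [← Int.cast_abs]; exact_mod_cast Int.one_le_abs hk1
  obtain ⟨nk, hnkd⟩ : ∃ nk : ℝ, |(k 0:ℝ)| + |(k 1:ℝ)| = nk := ⟨_, rfl⟩
  rw [hnkd] at hdk hpart ⊢
  have hnk2 : 2 ≤ nk := by rw [← hnkd]; linarith
  have hnkpos : 0 < nk := by linarith
  have haα : 0 < |a| := lt_of_lt_of_le hα ha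
  have hane : a ≠ 0 := fun hz => by simp [hz] at haα
  have hk1ne : ((k 1:ℝ)) ≠ 0 := Int.cast_ne_zero.mpr hk1
  have hθpos : 0 < θ := by rw [hθd]; positivity
  have hβpos : 0 < β := by rw [hβd]; linarith
  obtain ⟨r, hrd⟩ : ∃ r : ℝ, r = α / (|a| * nk ^ (2*τ+2) * |(k 1:ℝ)|) := ⟨_, rfl⟩
  rw [← hrd] at hpart ⊢
  have hppos : 0 < nk ^ (2*τ+2) := Real.rpow_pos_of_pos hnkpos _
  have hτpos : 0 < nk ^ τ := Real.rpow_pos_of_pos hnkpos _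
  have hrpos : 0 < r := by rw [hrd]; positivity
  have hk1nk : |(k 1:ℝ)| ≤ nk := by
    rw [← hnkd]; linarith [abs_nonneg ((k 0:ℝ))]
  -- distance lower bound
  have hident : b/a + (k 0:ℝ)/(k 1:ℝ) = ((k 0:ℝ)*a + (k 1:ℝ)*b)/(a*(k 1:ℝ)) := by
    field_simp; ring
  have hd0 : α / (nk ^ τ * (|a| * |(k 1:ℝ)|)) ≤ |b/a + (k 0:ℝ)/(k 1:ℝ)| := by
    rw [hident, abs_div, abs_mul, ← div_div]
    gcongr
  -- r is small compared to distance
  have h2nk : 2 * nk ^ τ ≤ nk ^ (2*τ+2) := by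
    have e : nk ^ (2*τ+2) = nk ^ τ * nk ^ (τ+2) := by
      rw [← Real.rpow_add hnkpos]; ring_nf
    have h22 : (2:ℝ) ≤ nk ^ (τ+2) := by
      calc (2:ℝ) = 2 ^ (1:ℝ) := (Real.rpow_one 2).symm
        _ ≤ 2 ^ (τ+2) := Real.rpow_le_rpow_of_exponent_le one_le_two (by linarith)
        _ ≤ nk ^ (τ+2) := Real.rpow_le_rpow (by norm_num) hnk2 (by linarith)
    nlinarith [hτpos]
  have hr2 : r ≤ α / (2 * (nk ^ τ * (|a| * |(k 1:ℝ)|))) := by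
    rw [hrd]
    apply div_le_div_of_nonneg_left hα.le (by positivity)
    nlinarith [haα, hk1R, hτpos,
      mul_le_mul_of_nonneg_right h2nk (by positivity : (0:ℝ) ≤ |a| * |(k 1:ℝ)|)]
  have hhalf : α / (nk ^ τ * (|a| * |(k 1:ℝ)|)) ≤ 2 * h := by
    have h1 := hd0.trans hpart
    have h2 : α / (2 * (nk ^ τ * (|a| * |(k 1:ℝ)|)))
        = (1/2) * (α / (nk ^ τ * (|a| * |(k 1:ℝ)|))) := by
      field_simp
    rw [h2] at hr2
    linarith
  have hX : 1 ≤ 2*|a|/α * h * nk ^ (τ+1) := by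
    have hmul : nk ^ τ * nk = nk ^ (τ+1) := (Real.rpow_add_one hnkpos.ne' τ).symm
    have h3 : α ≤ 2 * h * (nk ^ τ * (|a| * |(k 1:ℝ)|)) := by
      rw [div_le_iff₀ (by positivity)] at hhalf
      linarith
    have h4 : α ≤ 2 * h * (|a| * nk ^ (τ+1)) := by
      rw [← hmul]
      nlinarith [hτpos, haα, hh]
    rw [show 2*|a|/α * h * nk ^ (τ+1) = (2 * h * (|a| * nk ^ (τ+1)))/α by ring,
      le_div_iff₀ hα, one_mul]
    exact h4
  have hXθ : 1 ≤ (2*|a|/α * h * nk ^ (τ+1)) ^ θ := Real.one_le_rpow hX hθpos.le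
  have hee : (τ+1)*θ - (2*τ+2) = -m := by
    rw [hθd, hmd]; field_simp; ring
  have hK1pos : (0:ℝ) < |(k 1:ℝ)| := lt_of_lt_of_le one_pos hk1R
  have hexpand : 2*r*((2*|a|/α * h * nk ^ (τ+1)) ^ θ)
      = (2*(α/|a|)*(2*|a|/α) ^ θ) * h ^ θ * (nk ^ (-m) / |(k 1:ℝ)|) := by
    have e1 : (2*|a|/α * h * nk ^ (τ+1)) ^ θ
        = (2*|a|/α) ^ θ * h ^ θ * nk ^ ((τ+1)*θ) := by
      rw [Real.mul_rpow (by positivity) (Real.rpow_nonneg hnkpos.le _),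
        Real.mul_rpow (by positivity) hh.le, ← Real.rpow_mul hnkpos.le]
    have e2 : nk ^ (-m) = nk ^ ((τ+1)*θ) / nk ^ (2*τ+2) := by
      rw [← hee, Real.rpow_sub hnkpos]
    rw [hrd, e1, e2]
    exact halg |a| |(k 1:ℝ)| (nk ^ (2*τ+2)) (nk ^ ((τ+1)*θ)) ((2*|a|/α) ^ θ) (h ^ θ) α
      haα.ne' hK1pos.ne' hppos.ne'
  have hβm : β + β = m := by rw [hβd, hmd]; ring
  have h4 : (|(k 0:ℝ)| * |(k 1:ℝ)|) ^ β ≤ nk ^ m := by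
    calc (|(k 0:ℝ)| * |(k 1:ℝ)|) ^ β ≤ (nk*nk) ^ β := by
          apply Real.rpow_le_rpow (by positivity) _ hβpos.le
          rw [← hnkd]
          nlinarith [abs_nonneg ((k 0:ℝ)), abs_nonneg ((k 1:ℝ))]
      _ = nk ^ β * nk ^ β := Real.mul_rpow hnkpos.le hnkpos.le
      _ = nk ^ (β+β) := (Real.rpow_add hnkpos _ _).symm
      _ = nk ^ m := by rw [hβm]
  have hprod : nk ^ (-m) ≤ |(k 0:ℝ)| ^ (-β) * |(k 1:ℝ)| ^ (-β) := by
    calc nk ^ (-m) = (nk ^ m)⁻¹ := by rw [Real.rpow_neg hnkpos.le]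
      _ ≤ ((|(k 0:ℝ)| * |(k 1:ℝ)|) ^ β)⁻¹ := by
          apply inv_anti₀ (by positivity) h4
      _ = |(k 0:ℝ)| ^ (-β) * |(k 1:ℝ)| ^ (-β) := by
          rw [Real.mul_rpow (abs_nonneg _) (abs_nonneg _), mul_inv,
            ← Real.rpow_neg (abs_nonneg _), ← Real.rpow_neg (abs_nonneg _)]
  have hCpos : 0 ≤ (2*(α/|a|)*(2*|a|/α) ^ θ) * h ^ θ := by positivity
  calc 2*r ≤ 2*r*((2*|a|/α * h * nk ^ (τ+1)) ^ θ) := by nlinarith [hrpos, hXθ]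
    _ = (2*(α/|a|)*(2*|a|/α) ^ θ) * h ^ θ * (nk ^ (-m) / |(k 1:ℝ)|) := hexpand
    _ ≤ (2*(α/|a|)*(2*|a|/α) ^ θ) * h ^ θ * (nk ^ (-m)) := by
        apply mul_le_mul_of_nonneg_left _ hCpos
        apply div_le_self (Real.rpow_nonneg hnkpos.le _) hk1R
    _ ≤ (2*(α/|a|)*(2*|a|/α) ^ θ) * h ^ θ * (|(k 0:ℝ)| ^ (-β) * |(k 1:ℝ)| ^ (-β)) :=
        mul_le_mul_of_nonneg_left hprod hCpos

lemma tsum_prod_bound (β : ℝ) (hβ : 1 < β) :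
    ∑' k : Fin 2 → ℤ, ENNReal.ofReal (|(k 0:ℝ)| ^ (-β) * |(k 1:ℝ)| ^ (-β))
      ≤ ENNReal.ofReal ((∑' n : ℤ, |(n:ℝ)| ^ (-β))^2) := by
  have hsum : Summable fun n : ℤ => |(n : ℝ)| ^ (-β) := Real.summable_abs_int_rpow hβ
  have hnn : ∀ n : ℤ, 0 ≤ |(n : ℝ)| ^ (-β) := fun n => Real.rpow_nonneg (abs_nonneg _) _
  set Sz : ℝ := ∑' n : ℤ, |(n:ℝ)| ^ (-β) with hSz
  have hSznn : 0 ≤ Sz := tsum_nonneg hnn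
  have hof : ∑' n : ℤ, ENNReal.ofReal (|(n:ℝ)| ^ (-β)) = ENNReal.ofReal Sz :=
    (ENNReal.ofReal_tsum_of_nonneg hnn hsum).symm
  have e := (finTwoArrowEquiv ℤ).symm
  have hre : ∑' k : Fin 2 → ℤ, ENNReal.ofReal (|(k 0:ℝ)| ^ (-β) * |(k 1:ℝ)| ^ (-β))
      = ∑' p : ℤ × ℤ, ENNReal.ofReal (|(p.1:ℝ)| ^ (-β) * |(p.2:ℝ)| ^ (-β)) := by
    rw [← ((finTwoArrowEquiv ℤ).symm).tsum_eq
      (f := fun k : Fin 2 → ℤ => ENNReal.ofReal (|(k 0:ℝ)| ^ (-β) * |(k 1:ℝ)| ^ (-β)))]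
    congr 1
  rw [hre, ENNReal.tsum_prod']
  have hstep : ∀ a b : ℤ, ENNReal.ofReal (|((a,b).1:ℝ)| ^ (-β) * |((a,b).2:ℝ)| ^ (-β))
      = ENNReal.ofReal (|(a:ℝ)| ^ (-β)) * ENNReal.ofReal (|(b:ℝ)| ^ (-β)) :=
    fun a b => ENNReal.ofReal_mul (hnn a)
  calc ∑' (a : ℤ) (b : ℤ), ENNReal.ofReal (|((a,b).1:ℝ)| ^ (-β) * |((a,b).2:ℝ)| ^ (-β))
      = ∑' (a : ℤ) (b : ℤ), ENNReal.ofReal (|(a:ℝ)| ^ (-β)) * ENNReal.ofReal (|(b:ℝ)| ^ (-β)) := by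
        congr 1; funext a; congr 1; funext b; exact hstep a b
    _ = ∑' (a : ℤ), ENNReal.ofReal (|(a:ℝ)| ^ (-β)) * ∑' (b : ℤ), ENNReal.ofReal (|(b:ℝ)| ^ (-β)) := by
        congr 1; funext a; exact ENNReal.tsum_mul_left
    _ = ENNReal.ofReal Sz * ENNReal.ofReal Sz := by
        rw [hof, ENNReal.tsum_mul_right, hof]
    _ ≤ ENNReal.ofReal (Sz ^ 2) := by
        rw [← ENNReal.ofReal_mul hSznn, sq]

theorem stmt6 (τ α : ℝ) (hτ : 1 < τ) (hα : 0 < α) (hα1 : α < 1)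
    (ω₀ : Fin 2 → ℝ)
    (hdio : ∀ k : Fin 2 → ℤ, k ≠ 0 →
      α / (∑ i, |(k i : ℝ)|) ^ τ ≤ |∑ i, (k i : ℝ) * ω₀ i|)
    (ε₀ : ℝ) (hε₀ : 0 < ε₀)
    (ωhat : ℝ → Fin 2 → ℝ) (hcont : ContinuousOn ωhat (Set.Icc 0 ε₀))
    (h0 : ωhat 0 = 0) :
    ∃ S : Set ℝ, S ⊆ Set.Icc 0 ε₀ ∧ S.Nonempty ∧
      Cardinal.continuum ≤ Cardinal.mk S ∧
      (∀ ε ∈ S, ∀ k : Fin 2 → ℤ, k ≠ 0 →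
        α / (2 * (∑ i, |(k i : ℝ)|) ^ (2 * τ + 2))
          ≤ |∑ i, (k i : ℝ) * (ω₀ i + ωhat ε i)|) ∧
      (ContDiffOn ℝ 1 ωhat (Set.Icc 0 ε₀) → 0 < volume S) := by
  have ha : α ≤ |ω₀ 0| := by
    have h1 := hdio ![1, 0] (by intro hcon; simpa using congrFun hcon 0)
    simpa [Fin.sum_univ_two, Real.one_rpow] using h1
  have hb : α ≤ |ω₀ 1| := by
    have h1 := hdio ![0, 1] (by intro hcon; simpa using congrFun hcon 1)
    simpa [Fin.sum_univ_two, Real.one_rpow] using h1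
  have haα : 0 < |ω₀ 0| := lt_of_lt_of_le hα ha
  have hane : ω₀ 0 ≠ 0 := fun hz => by simp [hz] at haα
  -- small neighborhood where the perturbation is at most α/2
  have hc0 : Filter.Tendsto ωhat (nhdsWithin 0 (Set.Icc 0 ε₀)) (nhds 0) := by
    have := hcont 0 ⟨le_rfl, hε₀.le⟩
    rwa [ContinuousWithinAt, h0] at this
  obtain ⟨δ₁, hδ₁pos, hδ₁⟩ := Metric.tendsto_nhdsWithin_nhds.mp hc0 (α/2) (by linarith)
  set δ : ℝ := min (δ₁/2) ε₀ with hδd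
  have hδpos : 0 < δ := lt_min (by linarith) hε₀
  have hδε₀ : δ ≤ ε₀ := min_le_right _ _
  have hsmall : ∀ ε ∈ Set.Icc 0 δ, ∀ i, |ωhat ε i| ≤ α/2 := by
    intro ε hε i
    have hεε₀ : ε ∈ Set.Icc 0 ε₀ := ⟨hε.1, hε.2.trans hδε₀⟩
    have hdist : dist ε 0 < δ₁ := by
      rw [Real.dist_eq, sub_zero, abs_of_nonneg hε.1]
      calc ε ≤ δ := hε.2
        _ ≤ δ₁/2 := min_le_left _ _
        _ < δ₁ := by linarith
    have h2 := hδ₁ hεε₀ hdist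
    calc |ωhat ε i| = dist (ωhat ε i) 0 := by rw [Real.dist_eq, sub_zero]
      _ ≤ dist (ωhat ε) 0 := by
          simpa using dist_le_pi_dist (ωhat ε) (0 : Fin 2 → ℝ) i
      _ ≤ α/2 := h2.le
  have hx0lb : ∀ ε ∈ Set.Icc 0 δ, |ω₀ 0|/2 ≤ |ω₀ 0 + ωhat ε 0| ∧ α/2 ≤ |ω₀ 0 + ωhat ε 0| := by
    intro ε hε
    have hw := hsmall ε hε 0
    have h1 : |ω₀ 0| ≤ |ω₀ 0 + ωhat ε 0| + |ωhat ε 0| := by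
      calc |ω₀ 0| = |(ω₀ 0 + ωhat ε 0) + (-(ωhat ε 0))| := by ring_nf
        _ ≤ |ω₀ 0 + ωhat ε 0| + |(-(ωhat ε 0))| := abs_add_le _ _
        _ = |ω₀ 0 + ωhat ε 0| + |ωhat ε 0| := by rw [abs_neg]
    constructor <;> linarith
  have hx0ne : ∀ ε ∈ Set.Icc 0 δ, (ω₀ 0 + ωhat ε 0) ≠ 0 := by
    intro ε hε
    have := (hx0lb ε hε).2
    intro hz
    rw [hz] at this
    simp at this
    linarith
  have hdk : ∀ k : Fin 2 → ℤ, k ≠ 0 →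
      α / (|(k 0:ℝ)|+|(k 1:ℝ)|) ^ τ ≤ |(k 0:ℝ) * ω₀ 0 + (k 1:ℝ) * ω₀ 1| := by
    intro k hk
    have := hdio k hk
    simpa [Fin.sum_univ_two] using this
  by_cases hcol : ∀ ε ∈ Set.Icc 0 δ, (ω₀ 1 + ωhat ε 1) * ω₀ 0 = ω₀ 1 * (ω₀ 0 + ωhat ε 0)
  · -- colinear case : the whole interval works
    refine ⟨Set.Icc 0 δ, Set.Icc_subset_Icc le_rfl hδε₀, ⟨0, Set.left_mem_Icc.mpr hδpos.le⟩,
      le_of_eq (Cardinal.mk_Icc_real hδpos).symm, ?_, ?_⟩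
    · intro ε hε k hk
      simp only [Fin.sum_univ_two]
      exact key_colinear τ α (ω₀ 0) (ω₀ 1) (ω₀ 0 + ωhat ε 0) (ω₀ 1 + ωhat ε 1) hτ hα ha
        (hx0lb ε hε).1 (hcol ε hε) k hk (hdk k hk)
    · intro _
      rw [Real.volume_Icc, sub_zero]
      exact ENNReal.ofReal_pos.mpr hδpos
  · -- non-degenerate case
    push_neg at hcol
    obtain ⟨ε', hε'mem, hcolne⟩ := hcol
    obtain ⟨φ, hφd⟩ : ∃ f : ℝ → ℝ, f = fun t => (ω₀ 1 + ωhat t 1) / (ω₀ 0 + ωhat t 0) :=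
      ⟨_, rfl⟩
    have hφε : ∀ ε, φ ε = (ω₀ 1 + ωhat ε 1) / (ω₀ 0 + ωhat ε 0) := fun ε => by rw [hφd]
    obtain ⟨p₀, hp₀d⟩ : ∃ p : ℝ, p = ω₀ 1 / ω₀ 0 := ⟨_, rfl⟩
    have hφ0 : φ 0 = p₀ := by rw [hφε, hp₀d, h0]; simp
    have hne : φ ε' ≠ p₀ := by
      intro heq
      apply hcolne
      rw [hφε, hp₀d] at heq
      exact (div_eq_div_iff (hx0ne ε' hε'mem) hane).mp heq
    obtain ⟨θ, hθd⟩ : ∃ θ : ℝ, θ = (3*τ+1)/(2*τ+2) := ⟨_, rfl⟩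
    obtain ⟨m, hmd⟩ : ∃ m : ℝ, m = (τ+3)/2 := ⟨_, rfl⟩
    obtain ⟨β, hβd⟩ : ∃ b : ℝ, b = (τ+3)/4 := ⟨_, rfl⟩
    have hθ1 : 1 < θ := by
      rw [hθd, lt_div_iff₀ (by linarith : (0:ℝ) < 2*τ+2)]
      linarith
    have hβ1 : 1 < β := by rw [hβd]; linarith
    obtain ⟨Sz, hSzd⟩ : ∃ s : ℝ, s = ∑' n : ℤ, |(n:ℝ)| ^ (-β) := ⟨_, rfl⟩
    have hSznn : 0 ≤ Sz := by
      rw [hSzd]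
      exact tsum_nonneg fun n => Real.rpow_nonneg (abs_nonneg _) _
    obtain ⟨C₃, hC₃d⟩ : ∃ c : ℝ, c = 2*(α/|ω₀ 0|)*(2*|ω₀ 0|/α) ^ θ := ⟨_, rfl⟩
    have hC₃pos : 0 < C₃ := by rw [hC₃d]; positivity
    obtain ⟨C₅, hC₅d⟩ : ∃ c : ℝ, c = C₃ * Sz^2 := ⟨_, rfl⟩
    have hC₅nn : 0 ≤ C₅ := by rw [hC₅d]; positivity
    obtain ⟨hini, hinid⟩ : ∃ x : ℝ, x = (2*C₅+2) ^ (-(θ-1)⁻¹) := ⟨_, rfl⟩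
    have hinipos : 0 < hini := by
      rw [hinid]; exact Real.rpow_pos_of_pos (by linarith) _
    obtain ⟨hgap, hgapd⟩ : ∃ x : ℝ, x = min |φ ε' - p₀| hini := ⟨_, rfl⟩
    have hgappos : 0 < hgap := by
      rw [hgapd]
      exact lt_min (abs_pos.mpr (sub_ne_zero.mpr hne)) hinipos
    have hθm1 : 0 < θ - 1 := by linarith
    have hhθ : C₅ * hgap ^ θ ≤ hgap/2 := by
      have e1 : hgap ^ θ = hgap ^ (θ-1) * hgap := by
        have h2 := Real.rpow_add hgappos (θ-1) 1
        rw [sub_add_cancel, Real.rpow_one] at h2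
        exact h2
      have e2 : hgap ^ (θ-1) ≤ (2*C₅+2)⁻¹ := by
        calc hgap ^ (θ-1) ≤ hini ^ (θ-1) := by
              apply Real.rpow_le_rpow hgappos.le _ hθm1.le
              rw [hgapd]; exact min_le_right _ _
          _ = (2*C₅+2)⁻¹ := by
            rw [hinid, ← Real.rpow_mul (by linarith : (0:ℝ) ≤ 2*C₅+2), neg_mul,
              inv_mul_cancel₀ hθm1.ne']
            exact Real.rpow_neg_one _
      have h3 : C₅ * hgap ^ (θ-1) ≤ C₅ * (2*C₅+2)⁻¹ := mul_le_mul_of_nonneg_left e2 hC₅nn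
      have h4 : C₅ * (2*C₅+2)⁻¹ ≤ 1/2 := by
        rw [← div_eq_mul_inv, div_le_iff₀ (by linarith : (0:ℝ) < 2*C₅+2)]
        linarith
      calc C₅ * hgap ^ θ = (C₅ * hgap ^ (θ-1)) * hgap := by rw [e1]; ring
        _ ≤ (1/2) * hgap := mul_le_mul_of_nonneg_right (h3.trans h4) hgappos.le
        _ = hgap/2 := by ring
    -- the target interval J
    obtain ⟨q, hqd⟩ : ∃ x : ℝ, x = if p₀ < φ ε' then p₀ + hgap else p₀ - hgap := ⟨_, rfl⟩
    have hgapabs : hgap ≤ |φ ε' - p₀| := by rw [hgapd]; exact min_le_left _ _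
    have hqmem : q ∈ Set.uIcc p₀ (φ ε') := by
      rw [Set.mem_uIcc, hqd]
      rcases lt_or_ge p₀ (φ ε') with hlt | hge
      · rw [if_pos hlt]
        rw [abs_of_pos (by linarith)] at hgapabs
        left; constructor <;> linarith
      · rw [if_neg (not_lt.mpr hge)]
        have hlt' : φ ε' < p₀ := lt_of_le_of_ne hge hne
        rw [abs_of_neg (by linarith)] at hgapabs
        right; constructor <;> linarith
    have hqdist : |q - p₀| = hgap := by
      rw [hqd]
      rcases lt_or_ge p₀ (φ ε') with hlt | hge
      · rw [if_pos hlt]; rw [add_sub_cancel_left]; exact abs_of_pos hgappos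
      · rw [if_neg (not_lt.mpr hge)]
        rw [sub_sub_cancel_left]
        rw [abs_neg]
        exact abs_of_pos hgappos
    obtain ⟨J, hJd⟩ : ∃ s : Set ℝ, s = Set.uIcc p₀ q := ⟨_, rfl⟩
    have hJvol : volume J = ENNReal.ofReal hgap := by
      rw [hJd, Real.volume_interval, hqdist]
    have hJdist : ∀ y ∈ J, |y - p₀| ≤ hgap := by
      intro y hy
      rw [hJd] at hy
      exact (Set.abs_sub_left_of_mem_uIcc hy).trans (le_of_eq hqdist)
    -- the resonant zones
    obtain ⟨A, hAd⟩ : ∃ s : Set ℝ, s = ⋃ (k : Fin 2 → ℤ), ⋃ (_ : k 0 ≠ 0 ∧ k 1 ≠ 0),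
        Set.Ioo (-((k 0:ℝ)/(k 1:ℝ)) - α / (|ω₀ 0| * (|(k 0:ℝ)|+|(k 1:ℝ)|) ^ (2*τ+2) * |(k 1:ℝ)|))
          (-((k 0:ℝ)/(k 1:ℝ)) + α / (|ω₀ 0| * (|(k 0:ℝ)|+|(k 1:ℝ)|) ^ (2*τ+2) * |(k 1:ℝ)|)) :=
      ⟨_, rfl⟩
    have hAopen : IsOpen A := by
      rw [hAd]
      exact isOpen_iUnion fun k => isOpen_iUnion fun _ => isOpen_Ioo
    -- measure of the bad part
    have hperk : ∀ k : Fin 2 → ℤ, volume (J ∩ ⋃ (_ : k 0 ≠ 0 ∧ k 1 ≠ 0),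
        Set.Ioo (-((k 0:ℝ)/(k 1:ℝ)) - α / (|ω₀ 0| * (|(k 0:ℝ)|+|(k 1:ℝ)|) ^ (2*τ+2) * |(k 1:ℝ)|))
          (-((k 0:ℝ)/(k 1:ℝ)) + α / (|ω₀ 0| * (|(k 0:ℝ)|+|(k 1:ℝ)|) ^ (2*τ+2) * |(k 1:ℝ)|)))
        ≤ ENNReal.ofReal (C₃ * hgap ^ θ * (|(k 0:ℝ)| ^ (-β) * |(k 1:ℝ)| ^ (-β))) := by
      intro k
      by_cases hne2 : (J ∩ ⋃ (_ : k 0 ≠ 0 ∧ k 1 ≠ 0),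
          Set.Ioo (-((k 0:ℝ)/(k 1:ℝ)) - α / (|ω₀ 0| * (|(k 0:ℝ)|+|(k 1:ℝ)|) ^ (2*τ+2) * |(k 1:ℝ)|))
            (-((k 0:ℝ)/(k 1:ℝ)) + α / (|ω₀ 0| * (|(k 0:ℝ)|+|(k 1:ℝ)|) ^ (2*τ+2) * |(k 1:ℝ)|))).Nonempty
      · obtain ⟨y, hyJ, hyU⟩ := hne2
        obtain ⟨hks, hyI⟩ := Set.mem_iUnion.mp hyU
        have hk : k ≠ 0 := fun hz => hks.1 (by rw [hz]; rfl)
        have hpart : |ω₀ 1/ω₀ 0 + (k 0:ℝ)/(k 1:ℝ)|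
            ≤ hgap + α / (|ω₀ 0| * (|(k 0:ℝ)|+|(k 1:ℝ)|) ^ (2*τ+2) * |(k 1:ℝ)|) := by
          obtain ⟨hy1, hy2⟩ := hyI
          have h1 : |y - p₀| ≤ hgap := hJdist y hyJ
          have h2 : |y + (k 0:ℝ)/(k 1:ℝ)|
              ≤ α / (|ω₀ 0| * (|(k 0:ℝ)|+|(k 1:ℝ)|) ^ (2*τ+2) * |(k 1:ℝ)|) := by
            rw [abs_le]; constructor <;> [linarith; linarith]
          calc |ω₀ 1/ω₀ 0 + (k 0:ℝ)/(k 1:ℝ)|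
              = |(p₀ - y) + (y + (k 0:ℝ)/(k 1:ℝ))| := by rw [hp₀d]; ring_nf
            _ ≤ |p₀ - y| + |y + (k 0:ℝ)/(k 1:ℝ)| := abs_add_le _ _
            _ ≤ hgap + α / (|ω₀ 0| * (|(k 0:ℝ)|+|(k 1:ℝ)|) ^ (2*τ+2) * |(k 1:ℝ)|) := by
                rw [abs_sub_comm] at h1
                exact add_le_add h1 h2
        have hbnd := per_k τ α (ω₀ 0) (ω₀ 1) hgap θ m β hτ hα ha hgappos hθd hmd hβd
          k hks.1 hks.2 (hdk k hk) hpart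
        calc volume (J ∩ ⋃ (_ : k 0 ≠ 0 ∧ k 1 ≠ 0), Set.Ioo _ _)
            ≤ volume (Set.Ioo
              (-((k 0:ℝ)/(k 1:ℝ)) - α / (|ω₀ 0| * (|(k 0:ℝ)|+|(k 1:ℝ)|) ^ (2*τ+2) * |(k 1:ℝ)|))
              (-((k 0:ℝ)/(k 1:ℝ)) + α / (|ω₀ 0| * (|(k 0:ℝ)|+|(k 1:ℝ)|) ^ (2*τ+2) * |(k 1:ℝ)|))) := by
              apply measure_mono
              intro z hz
              exact (Set.mem_iUnion.mp hz.2).choose_spec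
          _ = ENNReal.ofReal
              (2 * (α / (|ω₀ 0| * (|(k 0:ℝ)|+|(k 1:ℝ)|) ^ (2*τ+2) * |(k 1:ℝ)|))) := by
              rw [Real.volume_Ioo]; congr 1; ring
          _ ≤ ENNReal.ofReal (C₃ * hgap ^ θ * (|(k 0:ℝ)| ^ (-β) * |(k 1:ℝ)| ^ (-β))) := by
              apply ENNReal.ofReal_le_ofReal
              rw [hC₃d]
              exact hbnd
      · rw [Set.not_nonempty_iff_eq_empty] at hne2
        rw [hne2, measure_empty]
        exact zero_le
    have hAvol : volume (J ∩ A) ≤ ENNReal.ofReal (hgap/2) := by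
      have hsplit : J ∩ A = ⋃ (k : Fin 2 → ℤ), (J ∩ ⋃ (_ : k 0 ≠ 0 ∧ k 1 ≠ 0),
          Set.Ioo (-((k 0:ℝ)/(k 1:ℝ)) - α / (|ω₀ 0| * (|(k 0:ℝ)|+|(k 1:ℝ)|) ^ (2*τ+2) * |(k 1:ℝ)|))
            (-((k 0:ℝ)/(k 1:ℝ)) + α / (|ω₀ 0| * (|(k 0:ℝ)|+|(k 1:ℝ)|) ^ (2*τ+2) * |(k 1:ℝ)|))) := by
        rw [hAd, Set.inter_iUnion]
      calc volume (J ∩ A) ≤ ∑' (k : Fin 2 → ℤ), volume (J ∩ ⋃ (_ : k 0 ≠ 0 ∧ k 1 ≠ 0),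
            Set.Ioo (-((k 0:ℝ)/(k 1:ℝ)) - α / (|ω₀ 0| * (|(k 0:ℝ)|+|(k 1:ℝ)|) ^ (2*τ+2) * |(k 1:ℝ)|))
              (-((k 0:ℝ)/(k 1:ℝ)) + α / (|ω₀ 0| * (|(k 0:ℝ)|+|(k 1:ℝ)|) ^ (2*τ+2) * |(k 1:ℝ)|))) := by
            rw [hsplit]; exact measure_iUnion_le _
        _ ≤ ∑' (k : Fin 2 → ℤ),
            ENNReal.ofReal (C₃ * hgap ^ θ * (|(k 0:ℝ)| ^ (-β) * |(k 1:ℝ)| ^ (-β))) :=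
            ENNReal.tsum_le_tsum hperk
        _ = ENNReal.ofReal (C₃ * hgap ^ θ) *
            ∑' (k : Fin 2 → ℤ), ENNReal.ofReal (|(k 0:ℝ)| ^ (-β) * |(k 1:ℝ)| ^ (-β)) := by
            rw [← ENNReal.tsum_mul_left]
            congr 1
            funext k
            rw [← ENNReal.ofReal_mul (by positivity)]
        _ ≤ ENNReal.ofReal (C₃ * hgap ^ θ) * ENNReal.ofReal (Sz^2) := by
            apply mul_le_mul_right
            rw [hSzd]
            exact tsum_prod_bound β hβ1
        _ = ENNReal.ofReal (C₅ * hgap ^ θ) := by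
            rw [← ENNReal.ofReal_mul (by positivity), hC₅d]
            congr 1
            ring
        _ ≤ ENNReal.ofReal (hgap/2) := ENNReal.ofReal_le_ofReal hhθ
    -- the good set
    obtain ⟨V, hVd⟩ : ∃ s : Set ℝ, s = J \ A := ⟨_, rfl⟩
    have hVlb : ENNReal.ofReal (hgap/2) ≤ volume V := by
      have hsub : J ⊆ V ∪ (J ∩ A) := by
        intro z hz
        by_cases hzA : z ∈ A
        · exact Or.inr ⟨hz, hzA⟩
        · exact Or.inl (by rw [hVd]; exact ⟨hz, hzA⟩)
      have h2 : volume J ≤ volume V + volume (J ∩ A) :=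
        (measure_mono hsub).trans (measure_union_le _ _)
      rw [hJvol] at h2
      have h3 : ENNReal.ofReal hgap = ENNReal.ofReal (hgap/2) + ENNReal.ofReal (hgap/2) := by
        rw [← ENNReal.ofReal_add (by linarith) (by linarith)]
        congr 1
        ring
      rw [h3] at h2
      have h4 : ENNReal.ofReal (hgap/2) + ENNReal.ofReal (hgap/2)
          ≤ volume V + ENNReal.ofReal (hgap/2) :=
        h2.trans (add_le_add le_rfl hAvol)
      exact (ENNReal.add_le_add_iff_right ENNReal.ofReal_ne_top).mp h4
    have hVne : volume V ≠ 0 := by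
      intro hz
      rw [hz, le_zero_iff, ENNReal.ofReal_eq_zero] at hVlb
      linarith
    have hVclosed : IsClosed V := by
      rw [hVd, hJd]
      exact IsClosed.sdiff (Set.uIcc_eq_union (α := ℝ) ▸ (isClosed_Icc.union isClosed_Icc)) hAopen
    -- continuity of φ
    have hφcont : ContinuousOn φ (Set.Icc 0 δ) := by
      rw [hφd]
      apply ContinuousOn.div
      · exact continuousOn_const.add
          ((continuous_apply 1).comp_continuousOn (hcont.mono (Set.Icc_subset_Icc le_rfl hδε₀)))
      · exact continuousOn_const.add
          ((continuous_apply 0).comp_continuousOn (hcont.mono (Set.Icc_subset_Icc le_rfl hδε₀)))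
      · exact hx0ne
    -- J is inside the image of [0, ε']
    have hJim : J ⊆ φ '' (Set.Icc 0 ε') := by
      have hIcc : Set.uIcc 0 ε' = Set.Icc 0 ε' := Set.uIcc_of_le hε'mem.1
      have hsub2 : Set.uIcc 0 ε' ⊆ Set.Icc 0 δ := by
        rw [hIcc]; exact Set.Icc_subset_Icc le_rfl hε'mem.2
      have hIVT := intermediate_value_uIcc (hφcont.mono hsub2)
      rw [hIcc] at hIVT
      intro y hy
      apply hIVT
      rw [hJd] at hy
      have : Set.uIcc p₀ q ⊆ Set.uIcc (φ 0) (φ ε') := by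
        rw [hφ0]
        exact Set.uIcc_subset_uIcc Set.left_mem_uIcc hqmem
      exact this hy
    obtain ⟨S, hSd⟩ : ∃ s : Set ℝ, s = Set.Icc 0 ε' ∩ φ ⁻¹' V := ⟨_, rfl⟩
    have hSsubδ : S ⊆ Set.Icc 0 δ := by
      rw [hSd]
      intro x hx
      exact ⟨hx.1.1, hx.1.2.trans hε'mem.2⟩
    have himg : φ '' S = V := by
      rw [hSd]
      apply Set.Subset.antisymm
      · rintro y ⟨ε, ⟨_, hε2⟩, rfl⟩
        exact hε2
      · intro v hv
        have hvJ : v ∈ J := by rw [hVd] at hv; exact hv.1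
        obtain ⟨ε, hεmem, hφεv⟩ := hJim hvJ
        exact ⟨ε, ⟨hεmem, by rw [Set.mem_preimage, hφεv]; exact hv⟩, hφεv⟩
    refine ⟨S, ?_, ?_, ?_, ?_, ?_⟩
    · intro x hx
      have := hSsubδ hx
      exact ⟨this.1, this.2.trans hδε₀⟩
    · obtain ⟨v, hv⟩ := nonempty_of_measure_ne_zero hVne
      rw [← himg] at hv
      obtain ⟨ε, hεS, -⟩ := hv
      exact ⟨ε, hεS⟩
    · have h1 : Cardinal.continuum ≤ Cardinal.mk V := aux_continuum_le hVclosed hVne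
      have h2 : Cardinal.mk V ≤ Cardinal.mk S := by
        rw [← himg]
        exact Cardinal.mk_image_le
      exact h1.trans h2
    · intro ε hεS k hk
      have hεδ := hSsubδ hεS
      simp only [Fin.sum_univ_two]
      apply key_good τ α (ω₀ 0) (ω₀ 1) hτ hα ha hb (ω₀ 0 + ωhat ε 0) (ω₀ 1 + ωhat ε 1)
        (by rw [add_sub_cancel_left]; exact hsmall ε hεδ 0)
        (by rw [add_sub_cancel_left]; exact hsmall ε hεδ 1) k hk
      intro hk0 hk1
      have hφV : φ ε ∈ V := by rw [hSd] at hεS; exact hεS.2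
      have hnotA : φ ε ∉ A := by rw [hVd] at hφV; exact hφV.2
      by_contra hlt
      push_neg at hlt
      apply hnotA
      rw [hAd]
      refine Set.mem_iUnion.mpr ⟨k, Set.mem_iUnion.mpr ⟨⟨hk0, hk1⟩, ?_⟩⟩
      rw [Set.mem_Ioo, hφε ε] at *
      obtain ⟨hl, hr⟩ := abs_lt.mp hlt
      constructor <;> [linarith; linarith]
    · intro hC1
      have hφC1 : ContDiffOn ℝ 1 φ (Set.Icc 0 δ) := by
        rw [hφd]
        apply ContDiffOn.div
        · exact contDiffOn_const.add
            ((contDiffOn_pi.mp (hC1.mono (Set.Icc_subset_Icc le_rfl hδε₀))) 1)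
        · exact contDiffOn_const.add
            ((contDiffOn_pi.mp (hC1.mono (Set.Icc_subset_Icc le_rfl hδε₀))) 0)
        · exact hx0ne
      have hdiffble : DifferentiableOn ℝ φ (Set.Icc 0 δ) := hφC1.differentiableOn one_ne_zero
      have hfc : ContinuousOn (fderivWithin ℝ φ (Set.Icc 0 δ)) (Set.Icc 0 δ) :=
        hφC1.continuousOn_fderivWithin (uniqueDiffOn_Icc hδpos) le_rfl
      obtain ⟨M, hM⟩ := isCompact_Icc.exists_bound_of_continuousOn hfc
      have hlip : LipschitzOnWith (Real.toNNReal M) φ (Set.Icc 0 δ) := by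
        apply Convex.lipschitzOnWith_of_nnnorm_fderivWithin_le hdiffble _ (convex_Icc 0 δ)
        intro x hx
        have h1 := hM x hx
        rw [← NNReal.coe_le_coe, coe_nnnorm, Real.coe_toNNReal']
        exact h1.trans (le_max_left _ _)
      by_contra hvol
      rw [not_lt, le_zero_iff] at hvol
      have hlipS : LipschitzOnWith (Real.toNNReal M) φ S := hlip.mono hSsubδ
      have him := hlipS.hausdorffMeasure_image_le zero_le_one
      rw [himg, hausdorffMeasure_real, ENNReal.rpow_one, hvol, mul_zero] at him
      exact hVne (le_zero_iff.mp him)
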